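/- Bounded-difference variance bound: Let X₁,…,Xₙ be independent random variables and Z = f(X₁,…,Xₙ), where f satisfies the bounded difference property with constants c₁,…,cₙ ≥ 0, i.e., for every i and all fixed values of the other coordinates, sup_x f(…,x,…) − inf_x f(…,x,…) ≤ cᵢ, where the varying argument is in position i. Then Var[Z] ≤ (1/4)·Σ_{k=1}^n cₖ². -/

import Mathlib

open MeasureTheory ProbabilityTheory Finset

section helpers

universe u

/-- Variance under a pushforward measure. -/
lemma BddDiffAux.variance_map {Ω β : Type*} [MeasurableSpace Ω] [MeasurableSpace β]
    {μ : Measure Ω} (T : Ω → β) (hT : Measurable T) (g : β → ℝ) (hg : Measurable g) :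
    variance g (μ.map T) = variance (fun ω => g (T ω)) μ := by
  have h1 : (μ.map T)[g] = μ[fun ω => g (T ω)] :=
    integral_map hT.aemeasurable hg.aestronglyMeasurable
  rw [variance, variance, evariance, evariance, h1,
    lintegral_map (by fun_prop) hT]

/-- `Fin.insertNth` commutes with `Function.update` on the remaining coordinates. -/
lemma BddDiffAux.insertNth_update {n : ℕ} {α : Fin (n + 1) → Type*} (p : Fin (n + 1)) (x : α p)
    (f : ∀ j, α (p.succAbove j)) (j : Fin n) (b : α (p.succAbove j)) :
    p.insertNth x (Function.update f j b)
      = Function.update (p.insertNth x f) (p.succAbove j) b := by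
  ext i
  cases i using p.succAboveCases with
  | x =>
    rw [Fin.insertNth_apply_same, Function.update_of_ne (Fin.succAbove_ne p j).symm,
      Fin.insertNth_apply_same]
  | p k =>
    rcases eq_or_ne k j with rfl | hkj
    · rw [Fin.insertNth_apply_succAbove, Function.update_self, Function.update_self]
    · rw [Fin.insertNth_apply_succAbove, Function.update_of_ne hkj,
        Function.update_of_ne (fun h => hkj (Fin.succAbove_right_injective h)),
        Fin.insertNth_apply_succAbove]

end helpers

section more
universe u

/-- Popoviciu-type bound: a random variable with oscillation at most `c` has variance
at most `c² / 4`. -/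
lemma BddDiffAux.variance_le_of_osc {β : Type*} [MeasurableSpace β] [Nonempty β]
    (μ : Measure β) [IsProbabilityMeasure μ] {Y : β → ℝ} (hY : AEMeasurable Y μ) {c : ℝ}
    (h : ∀ y y', Y y - Y y' ≤ c) : variance Y μ ≤ c ^ 2 / 4 := by
  obtain ⟨y₀⟩ := ‹Nonempty β›
  have hne : (Set.range Y).Nonempty := Set.range_nonempty Y
  have hbddA : BddAbove (Set.range Y) :=
    ⟨Y y₀ + c, by rintro _ ⟨y, rfl⟩; have := h y y₀; linarith⟩
  have hbddB : BddBelow (Set.range Y) :=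
    ⟨Y y₀ - c, by rintro _ ⟨y, rfl⟩; have := h y₀ y; linarith⟩
  set a := sInf (Set.range Y) with ha
  set b := sSup (Set.range Y) with hb
  have hab : ∀ y, Y y ∈ Set.Icc a b := fun y =>
    ⟨csInf_le hbddB ⟨y, rfl⟩, le_csSup hbddA ⟨y, rfl⟩⟩
  have hba : b - a ≤ c := by
    have h1 : b ≤ a + c := by
      apply csSup_le hne
      rintro _ ⟨y, rfl⟩
      have h2 : Y y - c ≤ a := by
        apply le_csInf hne
        rintro _ ⟨y', rfl⟩
        have := h y y'; linarith
      linarith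
    linarith
  have hab' : a ≤ b := le_trans (hab y₀).1 (hab y₀).2
  calc variance Y μ ≤ ((b - a) / 2) ^ 2 := variance_le_sq_of_bounded (ae_of_all _ hab) hY
    _ ≤ (c / 2) ^ 2 := by
        apply pow_le_pow_left₀ (by linarith) (by linarith)
    _ = c ^ 2 / 4 := by ring

/-- Tensorization (law of total variance) for a product of two probability measures. -/
lemma BddDiffAux.variance_prod {β γ : Type*} [MeasurableSpace β] [MeasurableSpace γ]
    (μ : Measure β) (ν : Measure γ) [IsProbabilityMeasure μ] [IsProbabilityMeasure ν]
    {F : β × γ → ℝ} (hF : Measurable F) {C : ℝ} (hC : ∀ p, |F p| ≤ C) :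
    variance F (μ.prod ν) =
      (∫ y, variance (fun x => F (x, y)) μ ∂ν) + variance (fun y => ∫ x, F (x, y) ∂μ) ν := by
  have hFnorm : ∀ p, ‖F p‖ ≤ C := fun p => by simpa using hC p
  have hFs : AEStronglyMeasurable F (μ.prod ν) := hF.aestronglyMeasurable
  have intF : Integrable F (μ.prod ν) :=
    (integrable_const C).mono' hFs (ae_of_all _ hFnorm)
  have intF2 : Integrable (fun p => F p ^ 2) (μ.prod ν) := by
    refine (integrable_const (C ^ 2)).mono' (hFs.pow 2) (ae_of_all _ fun p => ?_)
    rw [Real.norm_eq_abs, abs_pow]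
    exact pow_le_pow_left₀ (abs_nonneg _) (hC p) 2
  set g : γ → ℝ := fun y => ∫ x, F (x, y) ∂μ with hg
  set hh : γ → ℝ := fun y => ∫ x, F (x, y) ^ 2 ∂μ with hhh
  have gsm : StronglyMeasurable g := hF.stronglyMeasurable.integral_prod_left'
  have gbdd : ∀ y, |g y| ≤ C := fun y => by
    rw [← Real.norm_eq_abs]
    calc ‖∫ x, F (x, y) ∂μ‖ ≤ C * (μ Set.univ).toReal :=
          norm_integral_le_of_norm_le_const (ae_of_all _ fun x => hFnorm _)
      _ = C := by simp
  have intg : Integrable g ν :=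
    (integrable_const C).mono' gsm.aestronglyMeasurable
      (ae_of_all _ fun y => by simpa using gbdd y)
  have intg2 : Integrable (fun y => g y ^ 2) ν := by
    refine (integrable_const (C ^ 2)).mono' ((gsm.pow 2).aestronglyMeasurable)
      (ae_of_all _ fun y => ?_)
    rw [Real.norm_eq_abs, abs_pow]
    exact pow_le_pow_left₀ (abs_nonneg _) (gbdd y) 2
  have inth : Integrable hh ν := intF2.integral_prod_right
  -- per-slice measurability and MemLp
  have slice_meas : ∀ y, Measurable (fun x => F (x, y)) := fun y =>
    hF.comp (measurable_id.prodMk measurable_const)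
  have slice_mem : ∀ y : γ, MemLp (fun x => F (x, y)) 2 μ := fun y =>
    MemLp.of_bound (slice_meas y).aestronglyMeasurable C (ae_of_all _ fun x => hFnorm _)
  have slice_var : ∀ y, variance (fun x => F (x, y)) μ = hh y - g y ^ 2 := fun y => by
    rw [variance_eq_sub (slice_mem y)]
    rfl
  have memF : MemLp F 2 (μ.prod ν) := MemLp.of_bound hFs C (ae_of_all _ hFnorm)
  have memg : MemLp g 2 ν := MemLp.of_bound gsm.aestronglyMeasurable C
    (ae_of_all _ fun y => by simpa using gbdd y)
  have e1 : (μ.prod ν)[F] = ∫ y, g y ∂ν := integral_prod_symm F intF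
  have e2 : (μ.prod ν)[F ^ 2] = ∫ y, hh y ∂ν := by
    have : (F ^ 2 : β × γ → ℝ) = fun p => F p ^ 2 := rfl
    rw [this, integral_prod_symm _ intF2]
  have e3 : ∫ y, variance (fun x => F (x, y)) μ ∂ν = (∫ y, hh y ∂ν) - ∫ y, g y ^ 2 ∂ν := by
    rw [← integral_sub inth intg2]
    exact integral_congr_ae (ae_of_all _ fun y => slice_var y)
  rw [variance_eq_sub memF, variance_eq_sub memg, e1, e2, e3]
  have : (g ^ 2 : γ → ℝ) = fun y => g y ^ 2 := rfl
  rw [this]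
  ring

end more

section more2
universe u

/-- A function with bounded differences is bounded, relative to any base point. -/
lemma BddDiffAux.abs_sub_le_sum {n : ℕ} {α : Fin n → Type*} (f : (∀ i, α i) → ℝ)
    (c : Fin n → ℝ)
    (hbdd : ∀ (i : Fin n) (x : ∀ j, α j) (y y' : α i),
      f (Function.update x i y) - f (Function.update x i y') ≤ c i)
    (x₀ x : ∀ i, α i) : |f x - f x₀| ≤ ∑ i, c i := by
  classical
  have key : ∀ s : Finset (Fin n), |f (s.piecewise x x₀) - f x₀| ≤ ∑ i ∈ s, c i := by
    intro s
    induction s using Finset.induction_on with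
    | empty => simp [Finset.piecewise_empty]
    | @insert a s ha ih =>
      set P := s.piecewise x x₀ with hP
      have hins : (insert a s).piecewise x x₀ = Function.update P a (x a) :=
        Finset.piecewise_insert _ _ _ _
      have step : |f (Function.update P a (x a)) - f P| ≤ c a := by
        rw [abs_sub_le_iff]
        constructor
        · have := hbdd a P (x a) (P a)
          rwa [Function.update_eq_self] at this
        · have := hbdd a P (P a) (x a)
          rwa [Function.update_eq_self] at this
      calc |f ((insert a s).piecewise x x₀) - f x₀|
          ≤ |f (Function.update P a (x a)) - f P| + |f P - f x₀| := by
            rw [hins]; exact abs_sub_le _ _ _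
        _ ≤ c a + ∑ i ∈ s, c i := add_le_add step ih
        _ = ∑ i ∈ insert a s, c i := (Finset.sum_insert ha).symm
  have := key Finset.univ
  rwa [Finset.piecewise_univ] at this

/-- The joint law of independent random variables is the product of the marginal laws. -/
lemma BddDiffAux.map_eq_pi {Ω : Type*} [MeasurableSpace Ω] (μ : Measure Ω)
    [IsProbabilityMeasure μ] {n : ℕ} {α : Fin n → Type*} [∀ i, MeasurableSpace (α i)]
    (X : ∀ i, Ω → α i) (hX : ∀ i, Measurable (X i))
    (hind : iIndepFun X μ) :
    μ.map (fun ω i => X i ω) = Measure.pi (fun i => μ.map (X i)) := by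
  haveI : ∀ i, IsProbabilityMeasure (μ.map (X i)) := fun i =>
    Measure.isProbabilityMeasure_map (hX i).aemeasurable
  refine (Measure.pi_eq fun s hs => ?_).symm
  have hT : Measurable (fun ω i => X i ω) := measurable_pi_lambda _ hX
  rw [Measure.map_apply hT (MeasurableSet.univ_pi hs)]
  have hpre : (fun ω i => X i ω) ⁻¹' Set.pi Set.univ s = ⋂ i ∈ Finset.univ, X i ⁻¹' s i := by
    ext ω; simp [Set.mem_pi]
  rw [hpre, hind.measure_inter_preimage_eq_mul Finset.univ (fun i _ => hs i)]
  exact Finset.prod_congr rfl fun i _ => (Measure.map_apply (hX i) (hs i)).symm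

end more2

section piaux
universe u

lemma BddDiffAux.pi_aux (n : ℕ) :
    ∀ (α : Fin n → Type u) [inst : ∀ i, MeasurableSpace (α i)]
      (ν : ∀ i, Measure (α i)) [∀ i, IsProbabilityMeasure (ν i)]
      (f : (∀ i, α i) → ℝ), Measurable f → ∀ (C : ℝ), (∀ x, |f x| ≤ C) →
      ∀ (c : Fin n → ℝ),
      (∀ (i : Fin n) (x : ∀ j, α j) (y y' : α i),
        f (Function.update x i y) - f (Function.update x i y') ≤ c i) →
      variance f (Measure.pi ν) ≤ (1 / 4) * ∑ k, c k ^ 2 := by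
  induction n with
  | zero =>
    intro α _ ν _ f hf C hC c hbdd
    have hx : ∀ x y : (∀ i, α i), x = y := fun x y => funext fun i => i.elim0
    let x₀ : ∀ i, α i := fun i => i.elim0
    have hIcc : ∀ x, f x ∈ Set.Icc (f x₀) (f x₀) := fun x => by
      rw [hx x x₀]; exact ⟨le_rfl, le_rfl⟩
    have h1 : variance f (Measure.pi ν) ≤ ((f x₀ - f x₀) / 2) ^ 2 :=
      variance_le_sq_of_bounded (ae_of_all _ hIcc) hf.aemeasurable
    simpa using h1
  | succ n IH =>
    intro α mα ν hν f hf C hC c hbdd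
    haveI : ∀ i, Nonempty (α i) := fun i => Measure.nonempty_of_neZero (ν i)
    set p : Fin (n + 1) := 0 with hp
    set α' : Fin n → Type u := fun j => α (p.succAbove j) with hα'
    set ν' : ∀ j, Measure (α' j) := fun j => ν (p.succAbove j) with hν'
    haveI : ∀ j, IsProbabilityMeasure (ν' j) := fun j => hν _
    set e := MeasurableEquiv.piFinSuccAbove α p with he
    have MP : MeasurePreserving e (Measure.pi ν) ((ν p).prod (Measure.pi ν')) :=
      measurePreserving_piFinSuccAbove ν p
    have hmap : ((ν p).prod (Measure.pi ν')).map e.symm = Measure.pi ν :=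
      (MP.symm e).map_eq
    set F : α p × (∀ j, α' j) → ℝ := fun q => f (p.insertNth q.1 q.2) with hF
    have hesymm : ∀ q : α p × (∀ j, α' j), e.symm q = p.insertNth q.1 q.2 := fun q => rfl
    have hFmeas : Measurable F := by
      have : F = fun q => f (e.symm q) := funext fun q => by rw [hesymm]
      rw [this]
      exact hf.comp e.symm.measurable
    have hFC : ∀ q, |F q| ≤ C := fun q => hC _
    have hvar : variance f (Measure.pi ν) = variance F ((ν p).prod (Measure.pi ν')) := by
      rw [← hmap, BddDiffAux.variance_map _ e.symm.measurable _ hf]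
      exact congrArg (fun g => variance g _) (funext fun q => by rw [hesymm])
    -- the conditional expectation with respect to the remaining coordinates
    set g : (∀ j, α' j) → ℝ := fun y => ∫ x, F (x, y) ∂(ν p) with hg
    have hgsm : StronglyMeasurable g := hFmeas.stronglyMeasurable.integral_prod_left'
    have hgC : ∀ y, |g y| ≤ C := fun y => by
      rw [← Real.norm_eq_abs]
      calc ‖∫ x, F (x, y) ∂(ν p)‖ ≤ C * ((ν p) Set.univ).toReal :=
            norm_integral_le_of_norm_le_const (ae_of_all _ fun x => by
              simpa using hFC (x, y))
        _ = C := by simp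
    have hgbdd : ∀ (j : Fin n) (y : ∀ k, α' k) (b b' : α' j),
        g (Function.update y j b) - g (Function.update y j b') ≤ c (p.succAbove j) := by
      intro j y b b'
      have hint : ∀ y' : ∀ k, α' k, Integrable (fun x => F (x, y')) (ν p) := fun y' =>
        (integrable_const C).mono'
          (hFmeas.comp (measurable_id.prodMk measurable_const)).aestronglyMeasurable
          (ae_of_all _ fun x => by simpa using hFC (x, y'))
      rw [hg, ← integral_sub (hint _) (hint _)]
      have hle : ∀ x : α p,
          F (x, Function.update y j b) - F (x, Function.update y j b')
            ≤ c (p.succAbove j) := by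
        intro x
        have h1 : F (x, Function.update y j b)
            = f (Function.update (p.insertNth x y) (p.succAbove j) b) := by
          rw [hF]; exact congrArg f (BddDiffAux.insertNth_update p x y j b)
        have h2 : F (x, Function.update y j b')
            = f (Function.update (p.insertNth x y) (p.succAbove j) b') := by
          rw [hF]; exact congrArg f (BddDiffAux.insertNth_update p x y j b')
        rw [h1, h2]
        exact hbdd _ _ _ _
      calc ∫ x, (F (x, Function.update y j b) - F (x, Function.update y j b')) ∂(ν p)
          ≤ ∫ _, c (p.succAbove j) ∂(ν p) :=
            integral_mono ((hint _).sub (hint _)) (integrable_const _) hle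
        _ = c (p.succAbove j) := by simp
    -- apply tensorization
    rw [hvar, BddDiffAux.variance_prod _ _ hFmeas hFC]
    have term1 : (∫ y, variance (fun x => F (x, y)) (ν p) ∂(Measure.pi ν'))
        ≤ c p ^ 2 / 4 := by
      have hpt : ∀ y, variance (fun x => F (x, y)) (ν p) ≤ c p ^ 2 / 4 := by
        intro y
        have hmeas : AEMeasurable (fun x => F (x, y)) (ν p) :=
          (hFmeas.comp (measurable_id.prodMk measurable_const)).aemeasurable
        apply BddDiffAux.variance_le_of_osc (ν p) hmeas
        intro a a'
        have h1 : F (a, y) = f (Function.update (p.insertNth a y) p a) := by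
          rw [hF, Fin.update_insertNth]
        have h2 : F (a', y) = f (Function.update (p.insertNth a y) p a') := by
          rw [hF, Fin.update_insertNth]
        rw [h1, h2]
        exact hbdd _ _ _ _
      calc (∫ y, variance (fun x => F (x, y)) (ν p) ∂(Measure.pi ν'))
          ≤ ∫ _, c p ^ 2 / 4 ∂(Measure.pi ν') :=
            integral_mono_of_nonneg (ae_of_all _ fun y => variance_nonneg _ _)
              (integrable_const _) (ae_of_all _ hpt)
        _ = c p ^ 2 / 4 := by simp
    have term2 : variance g (Measure.pi ν') ≤ (1 / 4) * ∑ j, c (p.succAbove j) ^ 2 :=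
      IH α' ν' g hgsm.measurable C hgC (fun j => c (p.succAbove j)) hgbdd
    have hsum : ∑ k, c k ^ 2 = c p ^ 2 + ∑ j, c (p.succAbove j) ^ 2 :=
      Fin.sum_univ_succAbove (fun k => c k ^ 2) p
    rw [hsum]
    linarith

end piaux


/-- **Bounded-difference variance bound**: if `X 1, …, X n` are independent random variables and
`f` has the bounded difference property with constants `c 1, …, c n ≥ 0` (changing only the
`i`-th coordinate changes the value of `f` by at most `c i`), then
`Var[f (X 1, …, X n)] ≤ (1/4) ∑ k, (c k)²`. -/
theorem variance_le_of_bounded_differences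
    {Ω : Type*} [MeasurableSpace Ω] (μ : Measure Ω) [IsProbabilityMeasure μ]
    {n : ℕ} {α : Fin n → Type*} [∀ i, MeasurableSpace (α i)]
    (X : ∀ i, Ω → α i) (hXmeas : ∀ i, Measurable (X i))
    (hXindep : iIndepFun X μ)
    (f : (∀ i, α i) → ℝ) (hf : Measurable f)
    (c : Fin n → ℝ) (hc : ∀ i, 0 ≤ c i)
    (hbdd : ∀ (i : Fin n) (x : ∀ j, α j) (y y' : α i),
      f (Function.update x i y) - f (Function.update x i y') ≤ c i) :
    variance (fun ω => f (fun i => X i ω)) μ ≤ (1 / 4) * ∑ k : Fin n, (c k) ^ 2 := by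
  haveI : ∀ i, IsProbabilityMeasure (μ.map (X i)) := fun i =>
    Measure.isProbabilityMeasure_map (hXmeas i).aemeasurable
  obtain ⟨ω₀⟩ : Nonempty Ω := Measure.nonempty_of_neZero μ
  set x₀ : ∀ i, α i := fun i => X i ω₀ with hx₀
  have hT : Measurable (fun ω i => X i ω) := measurable_pi_lambda _ hXmeas
  have h1 : variance (fun ω => f (fun i => X i ω)) μ
      = variance f (μ.map (fun ω i => X i ω)) :=
    (BddDiffAux.variance_map _ hT f hf).symm
  rw [h1, BddDiffAux.map_eq_pi μ X hXmeas hXindep]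
  exact BddDiffAux.pi_aux n α (fun i => μ.map (X i)) f hf (|f x₀| + ∑ i, c i)
    (fun x => by
      have := BddDiffAux.abs_sub_le_sum f c hbdd x₀ x
      calc |f x| ≤ |f x - f x₀| + |f x₀| := by
            have := abs_add_le (f x - f x₀) (f x₀); simpa using this
        _ ≤ |f x₀| + ∑ i, c i := by linarith)
    c hbdd
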